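/- Let σ > 0, θ > 0, 0 < ν₀, ν₁ < 1 with ν₀ + ν₁ = 1. Suppose (βₙ)ₙ≥₀ satisfies β₀ = 1, βₙ → 0, and (n−1+σ+θ)βₙ = σβₙ₊₁ + (n−1+θν₁)βₙ₋₁ for all n ≥ 1, with 0 < βₙ₊₁ < βₙ for all n. Define ᾱₙ := σⁿ(βₙ₊₁ − βₙ₊₂)/(Fₙ(β₁ − β₂)) for n ≥ 1, ᾱ₀ := 1, where Fₙ := ∏_{j=1}^n (j + θν₁). Then (ᾱₙ) satisfies the recursion (n+1+σ+θ)ᾱₙ = (n+1+θν₁)ᾱₙ₊₁ + σᾱₙ₋₁ for all n ≥ 1, and ᾱₙ → 0 as n → ∞. -/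

import Mathlib

set_option maxHeartbeats 1000000
set_option maxRecDepth 8000


theorem stmt8 (σ θ ν₀ ν₁ : ℝ) (hσ : 0 < σ) (hθ : 0 < θ)
    (hν₀ : 0 < ν₀) (hν₀1 : ν₀ < 1) (hν₁ : 0 < ν₁) (hν₁1 : ν₁ < 1) (hν : ν₀ + ν₁ = 1)
    (β : ℕ → ℝ) (hβ0 : β 0 = 1) (hβlim : Filter.Tendsto β Filter.atTop (nhds 0))
    (hβdec : ∀ n : ℕ, 0 < β (n+1) ∧ β (n+1) < β n)
    (hβrec : ∀ n : ℕ, 1 ≤ n →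
      (((n:ℝ)-1) + σ + θ) * β n = σ * β (n+1) + (((n:ℝ)-1) + θ*ν₁) * β (n-1))
    (F : ℕ → ℝ) (hF : ∀ n : ℕ, F n = ∏ j ∈ Finset.Icc 1 n, ((j:ℝ) + θ*ν₁))
    (α : ℕ → ℝ) (hα0 : α 0 = 1)
    (hα : ∀ n : ℕ, 1 ≤ n → α n = σ^n * (β (n+1) - β (n+2)) / (F n * (β 1 - β 2))) :
    (∀ n : ℕ, 1 ≤ n →
      ((n:ℝ)+1+σ+θ) * α n = ((n:ℝ)+1+θ*ν₁) * α (n+1) + σ * α (n-1)) ∧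
    Filter.Tendsto α Filter.atTop (nhds 0) := by
  have hc : 0 < β 1 - β 2 := sub_pos.mpr (hβdec 1).2
  have hγpos : ∀ n : ℕ, 0 < β (n+1) - β (n+2) := fun n => sub_pos.mpr (hβdec (n+1)).2
  have hFpos : ∀ n : ℕ, 0 < F n := by
    intro n; rw [hF]
    exact Finset.prod_pos (fun j _ => by positivity)
  have hF0 : F 0 = 1 := by rw [hF]; simp
  have hFsucc : ∀ n : ℕ, F (n+1) = F n * (((n:ℝ)+1) + θ*ν₁) := by
    intro n
    rw [hF, hF, Finset.prod_Icc_succ_top (by omega : 1 ≤ n+1)]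
    push_cast; ring
  have hα' : ∀ n : ℕ, α n = σ^n * (β (n+1) - β (n+2)) / (F n * (β 1 - β 2)) := by
    intro n
    cases n with
    | zero => rw [hα0, hF0]; field_simp
    | succ m => exact hα (m+1) (by omega)
  have hK : ∀ m : ℕ, ((m:ℝ)+2+σ+θ) * (β (m+2) - β (m+3)) =
      σ * (β (m+3) - β (m+4)) + ((m:ℝ)+1+θ*ν₁) * (β (m+1) - β (m+2)) := by
    intro m
    have h1 := hβrec (m+2) (by omega)
    have h2 := hβrec (m+3) (by omega)
    simp only [show m+2-1 = m+1 from rfl, show m+3-1 = m+2 from rfl] at h1 h2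
    push_cast at h1 h2
    linear_combination h1 - h2
  constructor
  · intro n hn
    obtain ⟨m, rfl⟩ : ∃ m, n = m + 1 := ⟨n - 1, by omega⟩
    simp only [show m+1-1 = m from rfl]
    rw [hα' (m+1), hα' (m+2), hα' m, hFsucc (m+1), hFsucc m]
    have hFm := hFpos m
    have h1 : (0:ℝ) < ((m:ℝ)+1) + θ*ν₁ := by positivity
    have h2 : (0:ℝ) < ((m:ℝ)+1+1) + θ*ν₁ := by positivity
    push_cast
    simp only [← mul_div_assoc]
    rw [div_add_div _ _ (by positivity) (by positivity), div_eq_div_iff (by positivity) (by positivity)]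
    linear_combination (σ^(m+1) * (((m:ℝ))+2+θ*ν₁) * (F m)^2 * (((m:ℝ))+1+θ*ν₁) * (β 1 - β 2)^2) * hK m
  · have hβle1 : ∀ n : ℕ, β n ≤ 1 := by
      intro n
      induction n with
      | zero => rw [hβ0]
      | succ k ih => exact le_trans (le_of_lt (hβdec k).2) ih
    have hFfac : ∀ n : ℕ, (n.factorial : ℝ) ≤ F n := by
      intro n
      rw [hF]
      have hnat : (∏ j ∈ Finset.Icc 1 n, j) = n.factorial := by
        rw [← Finset.Ico_add_one_right_eq_Icc]; exact Finset.prod_Ico_id_eq_factorial n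
      rw [← hnat, Nat.cast_prod]
      exact Finset.prod_le_prod (fun j _ => by positivity)
        (fun j _ => le_add_of_nonneg_right (by positivity))
    apply squeeze_zero (g := fun n => σ^n / (n.factorial : ℝ) / (β 1 - β 2))
    · intro n
      rw [hα' n]
      exact le_of_lt (div_pos (mul_pos (pow_pos hσ n) (hγpos n)) (mul_pos (hFpos n) hc))
    · intro n
      rw [hα' n, div_div]
      apply div_le_div₀ (by positivity : (0:ℝ) ≤ σ^n)
      · calc σ^n * (β (n+1) - β (n+2)) ≤ σ^n * 1 := by
              apply mul_le_mul_of_nonneg_left _ (by positivity)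
              have := (hγpos n); have := hβle1 (n+1); have := (hβdec (n+1)).1
              linarith
           _ = σ^n := mul_one _
      · exact mul_pos (by positivity) hc
      · exact mul_le_mul_of_nonneg_right (hFfac n) (le_of_lt hc)
    · simpa using (FloorSemiring.tendsto_pow_div_factorial_atTop σ).div_const (β 1 - β 2)
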